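/- On the round 2-sphere with metric g = (3/λ)(dθ² + sin²θ dφ²) (λ > 0) and X♭ = -2 dF/F with F = a sin φ sin θ + b cos θ (a,b constants, not both zero), the pair (g, X) satisfies the horizon Einstein equation Ric(g) = ½ X♭⊗X♭ - ½ L_X g + λ g away from the zero set of F. -/

import Mathlib

noncomputable section

open scoped BigOperators

/-- Partial derivative of a function on `ℝⁿ` in the `i`-th coordinate direction. -/
def pd {n : ℕ} (i : Fin n) (f : (Fin n → ℝ) → ℝ) (x : Fin n → ℝ) : ℝ :=
  fderiv ℝ f x (Pi.single i 1)

/-- Christoffel symbols `Γ^k_{ij}` of a metric `g` with inverse `ginv`. -/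
def christoffel {n : ℕ} (g ginv : (Fin n → ℝ) → Matrix (Fin n) (Fin n) ℝ)
    (k i j : Fin n) (x : Fin n → ℝ) : ℝ :=
  (1/2) * ∑ l, ginv x k l *
    (pd i (fun y => g y j l) x + pd j (fun y => g y i l) x - pd l (fun y => g y i j) x)

/-- Ricci tensor `R_{ij}` in coordinates. -/
def ricci {n : ℕ} (g ginv : (Fin n → ℝ) → Matrix (Fin n) (Fin n) ℝ)
    (i j : Fin n) (x : Fin n → ℝ) : ℝ :=
  (∑ k, pd k (christoffel g ginv k i j) x)
  - (∑ k, pd j (christoffel g ginv k i k) x)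
  + (∑ k, ∑ l, christoffel g ginv k k l x * christoffel g ginv l i j x)
  - (∑ k, ∑ l, christoffel g ginv k j l x * christoffel g ginv l i k x)

/-- Covariant derivative `∇_a ω_b` of a one-form. -/
def covd {n : ℕ} (g ginv : (Fin n → ℝ) → Matrix (Fin n) (Fin n) ℝ)
    (ω : Fin n → (Fin n → ℝ) → ℝ) (a b : Fin n) (x : Fin n → ℝ) : ℝ :=
  pd a (ω b) x - ∑ c, christoffel g ginv c a b x * ω c x

/-- Raise the index of a one-form, producing vector-field components. -/
def raise {n : ℕ} (ginv : (Fin n → ℝ) → Matrix (Fin n) (Fin n) ℝ)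
    (ω : Fin n → (Fin n → ℝ) → ℝ) (a : Fin n) (x : Fin n → ℝ) : ℝ :=
  ∑ b, ginv x a b * ω b x

/-- Lie derivative `(L_V g)_{ij}` of the metric along a vector field `V`. -/
def lieMetric {n : ℕ} (g : (Fin n → ℝ) → Matrix (Fin n) (Fin n) ℝ)
    (V : Fin n → (Fin n → ℝ) → ℝ) (i j : Fin n) (x : Fin n → ℝ) : ℝ :=
  (∑ k, V k x * pd k (fun y => g y i j) x)
  + (∑ k, g x k j * pd i (V k) x) + (∑ k, g x i k * pd j (V k) x)

/-- The horizon Einstein equation `Ric = ½ X♭⊗X♭ − ½ L_X g + λ g` at a point,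
for the one-form `ω = X♭` (with `X` its `g`-dual vector field). -/
def HorizonEq {n : ℕ} (g ginv : (Fin n → ℝ) → Matrix (Fin n) (Fin n) ℝ)
    (ω : Fin n → (Fin n → ℝ) → ℝ) (lam : ℝ) (x : Fin n → ℝ) : Prop :=
  ∀ i j, ricci g ginv i j x =
    (1/2) * ω i x * ω j x - (1/2) * lieMetric g (raise ginv ω) i j x + lam * g x i j

section PDTools
open Real

lemma pdeq {n} {f : (Fin n → ℝ) → ℝ} {f' : (Fin n → ℝ) →L[ℝ] ℝ} {x} (h : HasFDerivAt f f' x)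
    (i : Fin n) : pd i f x = f' (Pi.single i 1) := by rw [pd, h.fderiv]

lemma pd_congr {n} {f g : (Fin n → ℝ) → ℝ} {x} (h : f =ᶠ[nhds x] g) (i : Fin n) :
    pd i f x = pd i g x := by unfold pd; rw [Filter.EventuallyEq.fderiv_eq h]

lemma pd_const {n} (i : Fin n) (c : ℝ) (x) : pd i (fun _ => c) x = 0 := by
  rw [pdeq (hasFDerivAt_const c x) i]; simp

lemma hcoord {n} (i : Fin n) (x : Fin n → ℝ) :
    HasFDerivAt (fun y : Fin n → ℝ => y i) (ContinuousLinearMap.proj (R := ℝ) i) x :=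
  (ContinuousLinearMap.proj (R := ℝ) (φ := fun _ : Fin n => ℝ) i).hasFDerivAt

lemma hsin {n} (i : Fin n) (x : Fin n → ℝ) :
    HasFDerivAt (fun y : Fin n → ℝ => Real.sin (y i))
      (Real.cos (x i) • (ContinuousLinearMap.proj i : (Fin n → ℝ) →L[ℝ] ℝ)) x :=
  by exact (Real.hasDerivAt_sin (x i)).comp_hasFDerivAt x (hcoord i x)

lemma hcos {n} (i : Fin n) (x : Fin n → ℝ) :
    HasFDerivAt (fun y : Fin n → ℝ => Real.cos (y i))
      ((-Real.sin (x i)) • (ContinuousLinearMap.proj i : (Fin n → ℝ) →L[ℝ] ℝ)) x :=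
  by exact (Real.hasDerivAt_cos (x i)).comp_hasFDerivAt x (hcoord i x)

lemma hinv {n} {g : (Fin n → ℝ) → ℝ} {g' : (Fin n → ℝ) →L[ℝ] ℝ} {x} (hg : HasFDerivAt g g' x)
    (h : g x ≠ 0) : HasFDerivAt (fun y => (g y)⁻¹) ((-(g x ^ 2)⁻¹) • g') x :=
  (hasDerivAt_inv h).comp_hasFDerivAt x hg

lemma hdiv {n} {f g : (Fin n → ℝ) → ℝ} {f' g' : (Fin n → ℝ) →L[ℝ] ℝ} {x} (hf : HasFDerivAt f f' x)
    (hg : HasFDerivAt g g' x) (h : g x ≠ 0) :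
    HasFDerivAt (fun y => f y / g y)
      (f x • ((-(g x ^ 2)⁻¹) • g') + (g x)⁻¹ • f') x := by
  simpa only [div_eq_mul_inv] using hf.fun_mul (hinv hg h)

end PDTools

namespace RoundSphere

variable (lam a b : ℝ)

/-- The round metric $g = (3/λ)(dθ² + \sin²θ\,dφ²)$ in spherical coordinates $p = (θ, φ)$. -/
def sphMetric (p : Fin 2 → ℝ) : Matrix (Fin 2) (Fin 2) ℝ :=
  !![3 / lam, 0; 0, (3 / lam) * (Real.sin (p 0))^2]

/-- The inverse of the round metric. -/
def sphMetricInv (p : Fin 2 → ℝ) : Matrix (Fin 2) (Fin 2) ℝ :=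
  !![lam / 3, 0; 0, (lam / 3) / (Real.sin (p 0))^2]

/-- $F = a \sin φ \sin θ + b \cos θ$. -/
def Ffun (p : Fin 2 → ℝ) : ℝ := a * Real.sin (p 1) * Real.sin (p 0) + b * Real.cos (p 0)

/-- The one-form $X^♭ = -2\,dF/F$. -/
def sphXflat (i : Fin 2) (p : Fin 2 → ℝ) : ℝ := -2 * pd i (Ffun a b) p / Ffun a b p

-- metric entry lemmas
lemma g00fun : (fun y : Fin 2 → ℝ => sphMetric lam y 0 0) = fun _ => 3 / lam := by
  funext y; simp [sphMetric]
lemma g01fun : (fun y : Fin 2 → ℝ => sphMetric lam y 0 1) = fun _ => 0 := by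
  funext y; simp [sphMetric]
lemma g10fun : (fun y : Fin 2 → ℝ => sphMetric lam y 1 0) = fun _ => 0 := by
  funext y; simp [sphMetric]
lemma g11fun : (fun y : Fin 2 → ℝ => sphMetric lam y 1 1) =
    fun y => 3 / lam * (Real.sin (y 0))^2 := by
  funext y; simp [sphMetric]

lemma g11fun' : (fun y : Fin 2 → ℝ => sphMetric lam y 1 1) =
    fun y => 3 / lam * (Real.sin (y 0) * Real.sin (y 0)) := by
  rw [g11fun]; funext y; ring

lemma pd_g (i j l : Fin 2) (y : Fin 2 → ℝ) :
    pd i (fun z => sphMetric lam z j l) y =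
      if i = 0 ∧ j = 1 ∧ l = 1 then 3 / lam * (2 * Real.sin (y 0) * Real.cos (y 0)) else 0 := by
  fin_cases i <;> fin_cases j <;> fin_cases l <;> simp only [Fin.zero_eta, Fin.mk_one]
  · rw [g00fun, if_neg (by simp), pd_const]
  · rw [g01fun, if_neg (by simp), pd_const]
  · rw [g10fun, if_neg (by simp), pd_const]
  · rw [g11fun', if_pos (by norm_num),
      pdeq (((hsin 0 y).fun_mul (hsin 0 y)).const_mul (3 / lam)) 0]
    simp [Pi.single_eq_same]
    ring
  · rw [g00fun, if_neg (by simp), pd_const]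
  · rw [g01fun, if_neg (by simp), pd_const]
  · rw [g10fun, if_neg (by simp), pd_const]
  · rw [g11fun', if_neg (by simp),
      pdeq (((hsin 0 y).fun_mul (hsin 0 y)).const_mul (3 / lam)) 1]
    simp [Pi.single_eq_same, Pi.single_eq_of_ne]

/-- explicit Christoffel symbols on the set `sin θ ≠ 0` -/
def Gam (k i j : Fin 2) (y : Fin 2 → ℝ) : ℝ :=
  if k = 0 then (if i = 1 ∧ j = 1 then -(Real.sin (y 0) * Real.cos (y 0)) else 0)
  else (if i = j then 0 else Real.cos (y 0) / Real.sin (y 0))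

lemma ginv_entries (y : Fin 2 → ℝ) :
    sphMetricInv lam y 0 0 = lam / 3 ∧ sphMetricInv lam y 0 1 = 0 ∧
    sphMetricInv lam y 1 0 = 0 ∧
    sphMetricInv lam y 1 1 = (lam / 3) / (Real.sin (y 0))^2 := by
  refine ⟨?_, ?_, ?_, ?_⟩ <;> simp [sphMetricInv]

lemma christoffel_eq (hlam : lam ≠ 0) {y : Fin 2 → ℝ} (hs : Real.sin (y 0) ≠ 0) (k i j : Fin 2) :
    christoffel (sphMetric lam) (sphMetricInv lam) k i j y = Gam k i j y := by
  obtain ⟨h1, h2, h3, h4⟩ := ginv_entries lam y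
  fin_cases k <;> fin_cases i <;> fin_cases j <;>
    simp only [Fin.zero_eta, Fin.mk_one, christoffel, Fin.sum_univ_two, pd_g, h1, h2, h3, h4, Gam] <;>
    norm_num <;> field_simp <;> ring


lemma Gam_fun (k i j : Fin 2) :
    Gam k i j =
      if k = 0 then (if i = 1 ∧ j = 1 then (fun y => -(Real.sin (y 0) * Real.cos (y 0))) else fun _ => 0)
      else (if i = j then (fun _ => 0) else fun y => Real.cos (y 0) / Real.sin (y 0)) := by
  fin_cases k <;> fin_cases i <;> fin_cases j <;> simp only [Fin.zero_eta, Fin.mk_one] <;>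
    (funext y; simp [Gam])

lemma pd_negsc (d : Fin 2) (y : Fin 2 → ℝ) :
    pd d (fun z => -(Real.sin (z 0) * Real.cos (z 0))) y =
      if d = 0 then Real.sin (y 0)^2 - Real.cos (y 0)^2 else 0 := by
  fin_cases d <;> simp only [Fin.zero_eta, Fin.mk_one] <;>
    [rw [pdeq ((hsin 0 y).fun_mul (hcos 0 y)).fun_neg 0]; rw [pdeq ((hsin 0 y).fun_mul (hcos 0 y)).fun_neg 1]] <;>
    simp [Pi.single_eq_same, Pi.single_eq_of_ne] <;> ring

lemma pd_cot {y : Fin 2 → ℝ} (hs : Real.sin (y 0) ≠ 0) (d : Fin 2) :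
    pd d (fun z => Real.cos (z 0) / Real.sin (z 0)) y =
      if d = 0 then -(1 / Real.sin (y 0)^2) else 0 := by
  fin_cases d <;> simp only [Fin.zero_eta, Fin.mk_one] <;>
    [rw [pdeq (hdiv (hcos 0 y) (hsin 0 y) hs) 0]; rw [pdeq (hdiv (hcos 0 y) (hsin 0 y) hs) 1]] <;>
    simp [Pi.single_eq_same, Pi.single_eq_of_ne]
  field_simp
  linear_combination (-1:ℝ) * Real.sin_sq_add_cos_sq (y 0)

lemma pd_Gam {y : Fin 2 → ℝ} (hs : Real.sin (y 0) ≠ 0) (d k i j : Fin 2) :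
    pd d (Gam k i j) y =
      if d = 0 then
        (if k = 0 then (if i = 1 ∧ j = 1 then Real.sin (y 0)^2 - Real.cos (y 0)^2 else 0)
         else (if i = j then 0 else -(1 / Real.sin (y 0)^2)))
      else 0 := by
  rw [Gam_fun]
  fin_cases k <;> fin_cases i <;> fin_cases j <;> simp only [Fin.zero_eta, Fin.mk_one] <;>
    norm_num <;> simp [pd_negsc, pd_cot hs, pd_const]


lemma christoffel_ev (hlam : lam ≠ 0) {p : Fin 2 → ℝ} (hs : Real.sin (p 0) ≠ 0) (k i j : Fin 2) :
    christoffel (sphMetric lam) (sphMetricInv lam) k i j =ᶠ[nhds p] Gam k i j := by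
  have hcont : ContinuousAt (fun y : Fin 2 → ℝ => Real.sin (y 0)) p :=
    (Real.continuous_sin.comp (continuous_apply 0)).continuousAt
  filter_upwards [hcont.eventually_ne hs] with y hy
  exact christoffel_eq lam hlam hy k i j

lemma ricci_val (hlam : lam ≠ 0) {p : Fin 2 → ℝ} (hs : Real.sin (p 0) ≠ 0) (i j : Fin 2) :
    ricci (sphMetric lam) (sphMetricInv lam) i j p = !![1, 0; 0, Real.sin (p 0)^2] i j := by
  have hpd : ∀ d k i' j' : Fin 2, pd d (christoffel (sphMetric lam) (sphMetricInv lam) k i' j') p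
      = pd d (Gam k i' j') p := fun d k i' j' => pd_congr (christoffel_ev lam hlam hs k i' j') d
  have hval : ∀ k i' j' : Fin 2, christoffel (sphMetric lam) (sphMetricInv lam) k i' j' p
      = Gam k i' j' p := fun k i' j' => (christoffel_ev lam hlam hs k i' j').eq_of_nhds
  fin_cases i <;> fin_cases j <;>
    simp only [Fin.zero_eta, Fin.mk_one, ricci, Fin.sum_univ_two, hpd, hval, pd_Gam hs, Gam] <;>
    norm_num <;> field_simp
  · linear_combination (-1:ℝ) * Real.sin_sq_add_cos_sq (p 0)
  · linear_combination (0:ℝ) * Real.sin_sq_add_cos_sq (p 0)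


lemma hFd (y : Fin 2 → ℝ) :
    HasFDerivAt (Ffun a b)
      (((a * Real.sin (y 1)) • (Real.cos (y 0) • (ContinuousLinearMap.proj 0 : (Fin 2 → ℝ) →L[ℝ] ℝ))
        + Real.sin (y 0) • (a • (Real.cos (y 1) • (ContinuousLinearMap.proj 1 : (Fin 2 → ℝ) →L[ℝ] ℝ))))
        + b • ((-Real.sin (y 0)) • (ContinuousLinearMap.proj 0 : (Fin 2 → ℝ) →L[ℝ] ℝ))) y :=
  (((hsin 1 y).const_mul a).mul (hsin 0 y)).add ((hcos 0 y).const_mul b)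

lemma pdF0 (y : Fin 2 → ℝ) :
    pd 0 (Ffun a b) y = a * Real.sin (y 1) * Real.cos (y 0) - b * Real.sin (y 0) := by
  rw [pdeq (hFd a b y) 0]
  simp [Pi.single_eq_same, Pi.single_eq_of_ne]
  ring

lemma pdF1 (y : Fin 2 → ℝ) :
    pd 1 (Ffun a b) y = a * Real.cos (y 1) * Real.sin (y 0) := by
  rw [pdeq (hFd a b y) 1]
  simp [Pi.single_eq_same, Pi.single_eq_of_ne]
  ring

lemma Xflat0 (y : Fin 2 → ℝ) : sphXflat a b 0 y
    = -2 * (a * Real.sin (y 1) * Real.cos (y 0) - b * Real.sin (y 0)) / Ffun a b y := by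
  rw [sphXflat, pdF0]

lemma Xflat1 (y : Fin 2 → ℝ) : sphXflat a b 1 y
    = -2 * (a * Real.cos (y 1) * Real.sin (y 0)) / Ffun a b y := by
  rw [sphXflat, pdF1]

lemma raise0 : raise (sphMetricInv lam) (sphXflat a b) 0 =
    fun y => lam / 3 * (-2 * (a * Real.sin (y 1) * Real.cos (y 0) - b * Real.sin (y 0)))
      / Ffun a b y := by
  funext y
  obtain ⟨h1, h2, h3, h4⟩ := ginv_entries lam y
  rw [raise, Fin.sum_univ_two, h1, h2, Xflat0]
  ring

lemma raise1 : raise (sphMetricInv lam) (sphXflat a b) 1 =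
    fun y => lam / 3 * (-2 * (a * Real.cos (y 1)))
      / (Real.sin (y 0) * Ffun a b y) := by
  funext y
  obtain ⟨h1, h2, h3, h4⟩ := ginv_entries lam y
  rw [raise, Fin.sum_univ_two, h3, h4, Xflat1]
  rcases eq_or_ne (Real.sin (y 0)) 0 with hs | hs
  · simp [hs]
  rcases eq_or_ne (Ffun a b y) 0 with hf | hf
  · simp [hf]
  field_simp
  ring


section pdV
variable {p : Fin 2 → ℝ}

lemma pdV0_0 (hs : Real.sin (p 0) ≠ 0) (hf : Ffun a b p ≠ 0) :
    pd 0 (raise (sphMetricInv lam) (sphXflat a b) 0) p =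
      2 * (lam / 3) * ((a * Real.sin (p 1) * Real.sin (p 0) + b * Real.cos (p 0))^2
        + (a * Real.sin (p 1) * Real.cos (p 0) - b * Real.sin (p 0))^2)
      / (a * Real.sin (p 1) * Real.sin (p 0) + b * Real.cos (p 0))^2 := by
  rw [raise0,
    pdeq (hdiv ((((((hsin 1 p).const_mul a).fun_mul (hcos 0 p)).fun_sub ((hsin 0 p).const_mul b)).const_mul
      (-2)).const_mul (lam/3)) (hFd a b p) hf) 0]
  simp [Pi.single_eq_same, Pi.single_eq_of_ne, Ffun]
  have hf' : a * Real.sin (p 1) * Real.sin (p 0) + b * Real.cos (p 0) ≠ 0 := hf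
  field_simp
  ring

lemma pdV0_1 (hs : Real.sin (p 0) ≠ 0) (hf : Ffun a b p ≠ 0) :
    pd 1 (raise (sphMetricInv lam) (sphXflat a b) 0) p =
      2 * (lam / 3) * ((a * Real.sin (p 1) * Real.cos (p 0) - b * Real.sin (p 0))
          * (a * Real.cos (p 1) * Real.sin (p 0))
        - a * Real.cos (p 1) * Real.cos (p 0)
          * (a * Real.sin (p 1) * Real.sin (p 0) + b * Real.cos (p 0)))
      / (a * Real.sin (p 1) * Real.sin (p 0) + b * Real.cos (p 0))^2 := by
  rw [raise0,
    pdeq (hdiv ((((((hsin 1 p).const_mul a).fun_mul (hcos 0 p)).fun_sub ((hsin 0 p).const_mul b)).const_mul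
      (-2)).const_mul (lam/3)) (hFd a b p) hf) 1]
  simp [Pi.single_eq_same, Pi.single_eq_of_ne, Ffun]
  have hf' : a * Real.sin (p 1) * Real.sin (p 0) + b * Real.cos (p 0) ≠ 0 := hf
  field_simp
  ring

lemma pdV1_0 (hs : Real.sin (p 0) ≠ 0) (hf : Ffun a b p ≠ 0) :
    pd 0 (raise (sphMetricInv lam) (sphXflat a b) 1) p =
      2 * (lam / 3) * (a * Real.cos (p 1)) *
        (Real.sin (p 0) * (a * Real.sin (p 1) * Real.cos (p 0) - b * Real.sin (p 0))
          + Real.cos (p 0) * (a * Real.sin (p 1) * Real.sin (p 0) + b * Real.cos (p 0)))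
      / (Real.sin (p 0) * (a * Real.sin (p 1) * Real.sin (p 0) + b * Real.cos (p 0)))^2 := by
  rw [raise1,
    pdeq (hdiv ((((hcos 1 p).const_mul a).const_mul (-2)).const_mul (lam/3))
      ((hsin 0 p).fun_mul (hFd a b p)) (mul_ne_zero hs hf)) 0]
  simp [Pi.single_eq_same, Pi.single_eq_of_ne, Ffun]
  have hf' : a * Real.sin (p 1) * Real.sin (p 0) + b * Real.cos (p 0) ≠ 0 := hf
  field_simp
  ring

lemma pdV1_1 (hs : Real.sin (p 0) ≠ 0) (hf : Ffun a b p ≠ 0) :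
    pd 1 (raise (sphMetricInv lam) (sphXflat a b) 1) p =
      2 * (lam / 3) * ((a * Real.cos (p 1))^2 * Real.sin (p 0)^2
        + a * Real.sin (p 1) * Real.sin (p 0)
          * (a * Real.sin (p 1) * Real.sin (p 0) + b * Real.cos (p 0)))
      / (Real.sin (p 0) * (a * Real.sin (p 1) * Real.sin (p 0) + b * Real.cos (p 0)))^2 := by
  rw [raise1,
    pdeq (hdiv ((((hcos 1 p).const_mul a).const_mul (-2)).const_mul (lam/3))
      ((hsin 0 p).fun_mul (hFd a b p)) (mul_ne_zero hs hf)) 1]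
  simp [Pi.single_eq_same, Pi.single_eq_of_ne, Ffun]
  have hf' : a * Real.sin (p 1) * Real.sin (p 0) + b * Real.cos (p 0) ≠ 0 := hf
  field_simp

end pdV

lemma g_entries (y : Fin 2 → ℝ) :
    sphMetric lam y 0 0 = 3 / lam ∧ sphMetric lam y 0 1 = 0 ∧
    sphMetric lam y 1 0 = 0 ∧
    sphMetric lam y 1 1 = 3 / lam * (Real.sin (y 0))^2 := by
  refine ⟨?_, ?_, ?_, ?_⟩ <;> simp [sphMetric]


set_option maxHeartbeats 4000000

/-- On the round 2-sphere with metric $g = (3/λ)(dθ² + \sin²θ\,dφ²)$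
($λ > 0$) and $X^♭ = -2\,dF/F$ with $F = a\sin φ\sin θ + b\cos θ$ ($a, b$ not both
zero), the pair $(g, X)$ satisfies the horizon Einstein equation
$\mathrm{Ric}(g) = ½X^♭⊗X^♭ - ½L_Xg + λg$ away from the zero set of $F$
(within the spherical coordinate chart). -/
theorem sphere_horizon_einstein (hlam : 0 < lam) (hab : a ≠ 0 ∨ b ≠ 0)
    (p : Fin 2 → ℝ) (hsin : Real.sin (p 0) ≠ 0) (hF : Ffun a b p ≠ 0) :
    HorizonEq (sphMetric lam) (sphMetricInv lam) (sphXflat a b) lam p := by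
  have hl : lam ≠ 0 := ne_of_gt hlam
  have hf' : a * Real.sin (p 1) * Real.sin (p 0) + b * Real.cos (p 0) ≠ 0 := hF
  obtain ⟨hg1, hg2, hg3, hg4⟩ := g_entries lam p
  intro i j
  rw [ricci_val lam hl hsin i j]
  fin_cases i <;> fin_cases j <;>
    (simp only [Fin.zero_eta, Fin.mk_one, lieMetric, Fin.sum_univ_two];
     simp only [pdV0_0 lam a b hsin hF, pdV0_1 lam a b hsin hF,
       pdV1_0 lam a b hsin hF, pdV1_1 lam a b hsin hF];
     simp only [pd_g, raise0, raise1, Xflat0, Xflat1, Ffun, hg1, hg2, hg3, hg4];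
     norm_num; field_simp; ring_nf)
  all_goals have hD : ((a * Real.sin (p 1) * Real.sin (p 0) + b * Real.cos (p 0))^2)⁻¹ *
      (a * Real.sin (p 1) * Real.sin (p 0) + b * Real.cos (p 0))^2 = 1 :=
    inv_mul_cancel₀ (pow_ne_zero 2 hf')
  · linear_combination (2:ℝ) * hD
  · linear_combination 2 * Real.sin (p 0) * hD - (2 * Real.sin (p 0) * a^2 * Real.sin (p 1)^2
      + 2 * a * Real.cos (p 0) * Real.sin (p 1) * b) *
      ((a * Real.sin (p 1) * Real.sin (p 0) + b * Real.cos (p 0))^2)⁻¹ * Real.sin_sq_add_cos_sq (p 0)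


end RoundSphere
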